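/- Let d > 0 and γ: ℝ → ℝ be continuous with compact support, γ ≤ 0 everywhere, and ∫_ℝ γ(s) ds < 0. Assume sup|γ| < 1/d and let γ₊ = max(sup γ, 0). Let φ ∈ 𝒮(ℝ) (Schwartz) with φ(s)=1 on the support of γ, and for σ > 0 define φ_σ by external scaling outside [-s₀,s₀] ⊇ supp γ. Then with Φ_σ(s,u) = √(2/d) φ_σ(s) sin(πu/(2d)), the quadratic form value q[Φ_σ] = ∫_ℝ∫₀^d ( |∂_s Φ_σ|²/(1-uγ(s)) + |∂_u Φ_σ|²(1-uγ(s)) ) du ds - (π²/(4d²))∫_ℝ∫₀^d |Φ_σ|²(1-uγ(s)) du ds satisfies q[Φ_σ] ≤ σ‖φ'‖²_{L²(ℝ)}/(1-dγ₊) + (1/d)∫_ℝ γ(s) ds, and hence q[Φ_σ] < 0 for σ sufficiently small. -/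

import Mathlib

open Real Set MeasureTheory intervalIntegral

private lemma trig_int (d r e : ℝ) (hd : 0 < d) :
    ∫ u in (0:ℝ)..d, (1/2 + e * Real.cos (π/d*u)/2) * (1 - u*r)
      = d/2 - r*(d^2/4 - e*(d^2/π^2)) := by
  have hπ : (π:ℝ) ≠ 0 := Real.pi_ne_zero
  have hdne : d ≠ 0 := hd.ne'
  set c := π/d with hc
  have hcne : c ≠ 0 := div_ne_zero hπ hdne
  set F : ℝ → ℝ := fun u => u/2 - r*u^2/4 + (e/(2*c))*Real.sin (c*u)
      - (e*r/2)*(u*Real.sin (c*u)/c + Real.cos (c*u)/c^2) with hF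
  have hder : ∀ u ∈ uIcc (0:ℝ) d, HasDerivAt F ((1/2 + e * Real.cos (c*u)/2) * (1 - u*r)) u := by
    intro u _
    have haff : HasDerivAt (fun u : ℝ => c*u) c u := by
      simpa using (hasDerivAt_id u).const_mul c
    have hsin : HasDerivAt (fun u : ℝ => Real.sin (c*u)) (Real.cos (c*u) * c) u :=
      (Real.hasDerivAt_sin (c*u)).comp u haff
    have hcos : HasDerivAt (fun u : ℝ => Real.cos (c*u)) (-Real.sin (c*u) * c) u :=
      (Real.hasDerivAt_cos (c*u)).comp u haff
    have h1 : HasDerivAt (fun u : ℝ => u/2) (1/2) u := (hasDerivAt_id u).div_const 2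
    have h2 : HasDerivAt (fun u : ℝ => r*u^2/4) (r*(2*u^1)/4) u :=
      ((hasDerivAt_pow 2 u).const_mul r).div_const 4
    have h3 : HasDerivAt (fun u : ℝ => (e/(2*c))*Real.sin (c*u)) ((e/(2*c))*(Real.cos (c*u)*c)) u :=
      hsin.const_mul _
    have h4 : HasDerivAt (fun u : ℝ => u*Real.sin (c*u)/c)
        ((1*Real.sin (c*u) + u*(Real.cos (c*u)*c))/c) u :=
      ((hasDerivAt_id u).mul hsin).div_const c
    have h5 : HasDerivAt (fun u : ℝ => Real.cos (c*u)/c^2) ((-Real.sin (c*u)*c)/c^2) u :=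
      hcos.div_const _
    have := ((h1.sub h2).add h3).sub ((h4.add h5).const_mul (e*r/2))
    refine this.congr_deriv ?_
    field_simp
    ring
  have hci : IntervalIntegrable (fun u => (1/2 + e * Real.cos (c*u)/2) * (1 - u*r)) volume 0 d := by
    apply Continuous.intervalIntegrable; fun_prop
  have := intervalIntegral.integral_eq_sub_of_hasDerivAt hder hci
  rw [this, hF]
  have hcd : c * d = π := div_mul_cancel₀ π hdne
  have hc2 : c^2 = π^2/d^2 := by rw [hc]; ring
  simp only [hcd, mul_zero, Real.sin_pi, Real.cos_pi, Real.sin_zero, Real.cos_zero, hc2]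
  field_simp
  ring

private lemma inner_int1 (d b r : ℝ) (hd : 0 < d) :
    ∫ u in (0:ℝ)..d, (b * (Real.cos (π*u/(2*d)) * (π/(2*d))))^2 * (1-u*r)
      = (b*(π/(2*d)))^2 * (d/2 - r*(d^2/4 - (d^2/π^2))) := by
  have h : ∀ u ∈ uIcc (0:ℝ) d, (fun u : ℝ => (b * (Real.cos (π*u/(2*d)) * (π/(2*d))))^2 * (1-u*r)) u
      = (fun u : ℝ => (b*(π/(2*d)))^2 * ((1/2 + 1 * Real.cos (π/d*u)/2) * (1-u*r))) u := by
    intro u _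
    have h2 : Real.cos (π*u/(2*d))^2 = 1/2 + Real.cos (π/d*u)/2 := by
      rw [Real.cos_sq, show 2*(π*u/(2*d)) = π/d*u by ring]
    simp only
    rw [mul_pow, mul_pow, h2]
    ring
  rw [intervalIntegral.integral_congr h, intervalIntegral.integral_const_mul,
    trig_int d r 1 hd]
  ring

private lemma inner_int2 (d a r : ℝ) (hd : 0 < d) :
    ∫ u in (0:ℝ)..d, (a * Real.sin (π*u/(2*d)))^2 * (1-u*r)
      = a^2 * (d/2 - r*(d^2/4 + (d^2/π^2))) := by
  have h : ∀ u ∈ uIcc (0:ℝ) d, (fun u : ℝ => (a * Real.sin (π*u/(2*d)))^2 * (1-u*r)) u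
      = (fun u : ℝ => a^2 * ((1/2 + (-1) * Real.cos (π/d*u)/2) * (1-u*r))) u := by
    intro u _
    have h2 : Real.sin (π*u/(2*d))^2 = 1/2 - Real.cos (π/d*u)/2 := by
      rw [Real.sin_sq, Real.cos_sq, show 2*(π*u/(2*d)) = π/d*u by ring]
      ring
    simp only
    rw [mul_pow, h2]
    ring
  rw [intervalIntegral.integral_congr h, intervalIntegral.integral_const_mul,
    trig_int d r (-1) hd]
  ring

private lemma integrable_comp_affine {g : ℝ → ℝ} (hg : Integrable g) (σ a b : ℝ) (hσ : σ ≠ 0) :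
    Integrable (fun s => g (a + σ*(s - b))) := by
  have h1 : Integrable (fun t => g ((a - σ*b) + t)) := hg.comp_add_left _
  have h2 := h1.comp_mul_left' hσ
  exact h2.congr (Filter.Eventually.of_forall fun s => by simp only; congr 1; ring)

private lemma cov_Ioi (g : ℝ → ℝ) (σ a : ℝ) (hσ : 0 < σ) :
    (∫ x in Ioi a, g x) = σ * ∫ x in Ioi a, g (a + σ*(x-a)) := by
  have himg : (fun x => a + σ*(x - a)) '' Ioi a = Ioi a := by
    ext t
    simp only [mem_image, mem_Ioi]
    constructor
    · rintro ⟨x, hx, rfl⟩; nlinarith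
    · intro ht
      refine ⟨a + (t-a)/σ, by have : 0 < (t-a)/σ := div_pos (by linarith) hσ; linarith, ?_⟩
      field_simp
      ring
  have hder : ∀ x ∈ Ioi a, HasDerivWithinAt (fun x : ℝ => a + σ*(x-a)) σ (Ioi a) x := by
    intro x _
    have : HasDerivAt (fun x : ℝ => a + σ*(x-a)) σ x := by
      simpa using (((hasDerivAt_id x).sub_const a).const_mul σ).const_add a
    exact this.hasDerivWithinAt
  have hinj : InjOn (fun x : ℝ => a + σ*(x-a)) (Ioi a) := by
    intro x _ y _ h
    simp only at h
    have := mul_left_cancel₀ hσ.ne' (by linarith : σ*(x-a) = σ*(y-a))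
    linarith
  have h := MeasureTheory.integral_image_eq_integral_abs_deriv_smul measurableSet_Ioi hder hinj g
  rw [himg] at h
  rw [h, MeasureTheory.integral_smul, abs_of_pos hσ, smul_eq_mul]

private lemma cov_Iio (g : ℝ → ℝ) (σ a : ℝ) (hσ : 0 < σ) :
    (∫ x in Iio a, g x) = σ * ∫ x in Iio a, g (a + σ*(x-a)) := by
  have himg : (fun x => a + σ*(x - a)) '' Iio a = Iio a := by
    ext t
    simp only [mem_image, mem_Iio]
    constructor
    · rintro ⟨x, hx, rfl⟩; nlinarith
    · intro ht
      refine ⟨a + (t-a)/σ, by have : (t-a)/σ < 0 := div_neg_of_neg_of_pos (by linarith) hσ; linarith, ?_⟩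
      field_simp
      ring
  have hder : ∀ x ∈ Iio a, HasDerivWithinAt (fun x : ℝ => a + σ*(x-a)) σ (Iio a) x := by
    intro x _
    have : HasDerivAt (fun x : ℝ => a + σ*(x-a)) σ x := by
      simpa using (((hasDerivAt_id x).sub_const a).const_mul σ).const_add a
    exact this.hasDerivWithinAt
  have hinj : InjOn (fun x : ℝ => a + σ*(x-a)) (Iio a) := by
    intro x _ y _ h
    simp only at h
    have := mul_left_cancel₀ hσ.ne' (by linarith : σ*(x-a) = σ*(y-a))
    linarith
  have h := MeasureTheory.integral_image_eq_integral_abs_deriv_smul measurableSet_Iio hder hinj g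
  rw [himg] at h
  rw [h, MeasureTheory.integral_smul, abs_of_pos hσ, smul_eq_mul]

set_option maxHeartbeats 1000000 in
theorem stmt9 (d s₀ : ℝ) (hd : 0 < d) (hs₀ : 0 < s₀)
    (γ : ℝ → ℝ) (hγc : Continuous γ) (hγsupp : HasCompactSupport γ)
    (hγsupp' : Function.support γ ⊆ Icc (-s₀) s₀)
    (hγneg : ∀ s, γ s ≤ 0) (hγint : (∫ s, γ s) < 0)
    (hγbd : ∀ s, |γ s| < 1 / d)
    (γp : ℝ) (hγp : γp = max (⨆ s, γ s) 0)
    (φ : SchwartzMap ℝ ℝ)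
    (hφ1 : ∀ s ∈ Icc (-s₀) s₀, φ s = 1)
    (φσ : ℝ → ℝ → ℝ)
    (hφσ : ∀ σ s, φσ σ s = if |s| ≤ s₀ then φ s
        else if s₀ ≤ s then φ (s₀ + σ * (s - s₀)) else φ (-s₀ + σ * (s + s₀)))
    (Φ : ℝ → ℝ → ℝ → ℝ)
    (hΦ : ∀ σ s u, Φ σ s u = Real.sqrt (2 / d) * φσ σ s * Real.sin (π * u / (2 * d)))
    (Q : ℝ → ℝ)
    (hQ : ∀ σ, Q σ =
      (∫ s, ∫ u in (0:ℝ)..d,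
        ((deriv (fun s' => Φ σ s' u) s) ^ 2 / (1 - u * γ s)
          + (deriv (fun u' => Φ σ s u') u) ^ 2 * (1 - u * γ s)))
      - (π ^ 2 / (4 * d ^ 2)) * ∫ s, ∫ u in (0:ℝ)..d, (Φ σ s u) ^ 2 * (1 - u * γ s)) :
    (∀ σ, 0 < σ →
      Q σ ≤ σ * (∫ s, (deriv (⇑φ) s) ^ 2) / (1 - d * γp) + (1 / d) * ∫ s, γ s) ∧
    ∃ σ₁ > 0, ∀ σ, 0 < σ → σ < σ₁ → Q σ < 0 := by
  classical
  have hπ : (π:ℝ) ≠ 0 := Real.pi_ne_zero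
  have hdne : d ≠ 0 := hd.ne'
  have hγ0 : ∀ s : ℝ, ¬ |s| ≤ s₀ → γ s = 0 := by
    intro s h
    by_contra hne
    exact h (abs_le.2 (mem_Icc.1 (hγsupp' (Function.mem_support.2 hne))))
  have hγp0 : γp = 0 := by
    rw [hγp]
    have hbdd : BddAbove (Set.range γ) := ⟨0, by rintro _ ⟨s, rfl⟩; exact hγneg s⟩
    have h1 : γ (s₀+1) = 0 := hγ0 (s₀+1) (by rw [abs_of_nonneg (by linarith)]; push_neg; linarith)
    have h2 : (⨆ s, γ s) = 0 :=
      le_antisymm (ciSup_le hγneg) (h1 ▸ le_ciSup hbdd (s₀+1))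
    rw [h2]; simp
  have hγi : Integrable γ := hγc.integrable_of_hasCompactSupport hγsupp
  have hφsq : Integrable (fun t : ℝ => (φ t)^2) := by
    have hb : ∃ C, ∀ x : ℝ, ‖(φ x : ℝ)‖ ≤ C := ⟨_, fun x => φ.norm_le_seminorm ℝ x⟩
    have h1 : Integrable (fun t => φ t) := φ.integrable
    exact (h1.bdd_mul h1.aestronglyMeasurable (Filter.Eventually.of_forall hb.choose_spec)).congr
      (Filter.Eventually.of_forall fun t => (sq (φ t)).symm)
  have hφ'sq : Integrable (fun t : ℝ => (deriv (⇑φ) t)^2) := by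
    set φD := SchwartzMap.derivCLM ℝ ℝ φ with hφDdef
    have hφDeq : ∀ t, φD t = deriv (⇑φ) t := fun t => rfl
    have hb : ∃ C, ∀ x : ℝ, ‖(φD x : ℝ)‖ ≤ C := ⟨_, fun x => φD.norm_le_seminorm ℝ x⟩
    have h1 : Integrable (fun t => φD t) := φD.integrable
    exact (h1.bdd_mul h1.aestronglyMeasurable (Filter.Eventually.of_forall hb.choose_spec)).congr
      (Filter.Eventually.of_forall fun t => by
        show φD t * φD t = deriv (⇑φ) t ^ 2
        rw [← hφDeq t, sq])
  have hdisj : Disjoint (Iio (-s₀)) (Ioi s₀) := by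
    apply Set.disjoint_left.2
    intro x hx hx2
    simp only [mem_Iio, mem_Ioi] at hx hx2
    linarith
  have hTle : (∫ t in Iio (-s₀), (deriv (⇑φ) t)^2) + (∫ t in Ioi s₀, (deriv (⇑φ) t)^2)
      ≤ ∫ t, (deriv (⇑φ) t)^2 := by
    rw [← setIntegral_union hdisj measurableSet_Ioi hφ'sq.integrableOn hφ'sq.integrableOn]
    exact setIntegral_le_integral hφ'sq (Filter.Eventually.of_forall fun x => sq_nonneg _)
  have hM0 : 0 ≤ ∫ t, (deriv (⇑φ) t)^2 := integral_nonneg fun t => sq_nonneg _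
  have hγineg : (1/d) * ∫ s, γ s < 0 :=
    mul_neg_of_pos_of_neg (by positivity) hγint
  -- the key identity
  have key : ∀ σ, 0 < σ → Q σ = (1/d) * (∫ s, γ s)
      + σ * ((∫ t in Iio (-s₀), (deriv (⇑φ) t)^2) + (∫ t in Ioi s₀, (deriv (⇑φ) t)^2)) := by
    intro σ hσ
    set c0 := Real.sqrt (2/d) with hc0
    have hc0sq : c0^2 = 2/d := Real.sq_sqrt (by positivity)
    have hduG : ∀ s u, deriv (fun u' => Φ σ s u') u
        = c0 * φσ σ s * (Real.cos (π*u/(2*d)) * (π/(2*d))) := by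
      intro s u
      have haff : HasDerivAt (fun u' : ℝ => π*u'/(2*d)) (π/(2*d)) u := by
        simpa using ((hasDerivAt_id u).const_mul π).div_const (2*d)
      have h1 : HasDerivAt (fun u' : ℝ => Real.sin (π*u'/(2*d)))
          (Real.cos (π*u/(2*d)) * (π/(2*d))) u := (Real.hasDerivAt_sin _).comp u haff
      have h2 := h1.const_mul (c0 * φσ σ s)
      have hfe : (fun u' => Φ σ s u') = fun u' => (c0 * φσ σ s) * Real.sin (π*u'/(2*d)) := by
        funext u'; rw [hΦ, hc0]
      rw [hfe, h2.deriv]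
    have hφσ1 : ∀ s : ℝ, |s| ≤ s₀ → φσ σ s = 1 := fun s h => by
      rw [hφσ, if_pos h]; exact hφ1 s (abs_le.1 h)
    set G1 : ℝ → ℝ := fun s => if |s| ≤ s₀ then
        (c0*(π/(2*d)))^2 * (d/2 - γ s*(d^2/4 - (d^2/π^2)))
      else (if s₀ ≤ s then
          c0^2 * (σ^2*(deriv (⇑φ) (s₀+σ*(s-s₀)))^2 + (π/(2*d))^2*(φ (s₀+σ*(s-s₀)))^2) * (d/2)
        else
          c0^2 * (σ^2*(deriv (⇑φ) (-s₀+σ*(s+s₀)))^2 + (π/(2*d))^2*(φ (-s₀+σ*(s+s₀)))^2) * (d/2))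
      with hG1
    set G2 : ℝ → ℝ := fun s => if |s| ≤ s₀ then c0^2 * (d/2 - γ s*(d^2/4 + (d^2/π^2)))
      else (if s₀ ≤ s then c0^2 * (φ (s₀+σ*(s-s₀)))^2 * (d/2)
        else c0^2 * (φ (-s₀+σ*(s+s₀)))^2 * (d/2)) with hG2
    -- case |s| < s₀
    have hcase1 : ∀ s : ℝ, |s| < s₀ →
        ((∫ u in (0:ℝ)..d, ((deriv (fun s' => Φ σ s' u) s)^2/(1-u*γ s)
            + (deriv (fun u' => Φ σ s u') u)^2*(1-u*γ s))) = G1 s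
          ∧ (∫ u in (0:ℝ)..d, (Φ σ s u)^2*(1-u*γ s)) = G2 s) := by
      intro s hlt
      have hle : |s| ≤ s₀ := hlt.le
      have hds : ∀ u : ℝ, deriv (fun s' => Φ σ s' u) s = 0 := by
        intro u
        have hop : IsOpen {x : ℝ | |x| < s₀} := isOpen_lt continuous_abs continuous_const
        have hev : (fun s' => Φ σ s' u) =ᶠ[nhds s] (fun _ => c0 * Real.sin (π*u/(2*d))) := by
          filter_upwards [hop.mem_nhds hlt] with x hx
          rw [hΦ, hφσ1 x (le_of_lt hx), mul_one, hc0]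
        rw [hev.deriv_eq, deriv_const]
      constructor
      · have e1 : (∫ u in (0:ℝ)..d, ((deriv (fun s' => Φ σ s' u) s)^2/(1-u*γ s)
              + (deriv (fun u' => Φ σ s u') u)^2*(1-u*γ s)))
            = ∫ u in (0:ℝ)..d, (c0 * (Real.cos (π*u/(2*d)) * (π/(2*d))))^2 * (1-u*γ s) := by
          apply intervalIntegral.integral_congr
          intro u _
          simp only
          rw [hds u, hduG s u, hφσ1 s hle]
          ring
        rw [e1, inner_int1 d c0 (γ s) hd]
        simp only [hG1, if_pos hle]
      · have e2 : (∫ u in (0:ℝ)..d, (Φ σ s u)^2*(1-u*γ s))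
            = ∫ u in (0:ℝ)..d, (c0 * Real.sin (π*u/(2*d)))^2 * (1-u*γ s) := by
          apply intervalIntegral.integral_congr
          intro u _
          simp only
          rw [hΦ, hφσ1 s hle, mul_one, hc0]
        rw [e2, inner_int2 d c0 (γ s) hd]
        simp only [hG2, if_pos hle]
    -- case s₀ < s
    have hcase2 : ∀ s : ℝ, s₀ < s →
        ((∫ u in (0:ℝ)..d, ((deriv (fun s' => Φ σ s' u) s)^2/(1-u*γ s)
            + (deriv (fun u' => Φ σ s u') u)^2*(1-u*γ s))) = G1 s
          ∧ (∫ u in (0:ℝ)..d, (Φ σ s u)^2*(1-u*γ s)) = G2 s) := by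
      intro s hgt
      have habs : ¬ |s| ≤ s₀ := not_le.2 (lt_of_lt_of_le hgt (le_abs_self s))
      have hγ0s : γ s = 0 := hγ0 s habs
      have hφσs : φσ σ s = φ (s₀+σ*(s-s₀)) := by rw [hφσ, if_neg habs, if_pos hgt.le]
      have hds : ∀ u : ℝ, deriv (fun s' => Φ σ s' u) s
          = c0 * Real.sin (π*u/(2*d)) * (deriv (⇑φ) (s₀+σ*(s-s₀)) * σ) := by
        intro u
        have hev : (fun s' => Φ σ s' u) =ᶠ[nhds s]
            (fun s' => (c0 * Real.sin (π*u/(2*d))) * φ (s₀+σ*(s'-s₀))) := by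
          filter_upwards [Ioi_mem_nhds hgt] with x hx
          have hax : ¬ |x| ≤ s₀ := not_le.2 (lt_of_lt_of_le hx (le_abs_self x))
          rw [hΦ, hφσ, if_neg hax, if_pos (le_of_lt hx), hc0]
          ring
        rw [hev.deriv_eq]
        have haff : HasDerivAt (fun x : ℝ => s₀+σ*(x-s₀)) σ s := by
          simpa using (((hasDerivAt_id s).sub_const s₀).const_mul σ).const_add s₀
        have hφd : HasDerivAt (⇑φ) (deriv (⇑φ) (s₀+σ*(s-s₀))) (s₀+σ*(s-s₀)) :=
          φ.differentiableAt.hasDerivAt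
        have hcomp := (hφd.comp s haff).const_mul (c0 * Real.sin (π*u/(2*d)))
        have := hcomp.deriv
        simpa [Function.comp, mul_assoc] using this
      constructor
      · have hi1 : IntervalIntegrable (fun u =>
            ((c0 * (deriv (⇑φ) (s₀+σ*(s-s₀)) * σ)) * Real.sin (π*u/(2*d)))^2 * (1-u*γ s))
            volume 0 d := by
          apply Continuous.intervalIntegrable; fun_prop
        have hi2 : IntervalIntegrable (fun u =>
            ((c0 * φ (s₀+σ*(s-s₀))) * (Real.cos (π*u/(2*d)) * (π/(2*d))))^2 * (1-u*γ s))
            volume 0 d := by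
          apply Continuous.intervalIntegrable; fun_prop
        have e1 : (∫ u in (0:ℝ)..d, ((deriv (fun s' => Φ σ s' u) s)^2/(1-u*γ s)
              + (deriv (fun u' => Φ σ s u') u)^2*(1-u*γ s)))
            = (∫ u in (0:ℝ)..d,
              (((c0 * (deriv (⇑φ) (s₀+σ*(s-s₀)) * σ)) * Real.sin (π*u/(2*d)))^2 * (1-u*γ s)
              + ((c0 * φ (s₀+σ*(s-s₀))) * (Real.cos (π*u/(2*d)) * (π/(2*d))))^2 * (1-u*γ s))) := by
          apply intervalIntegral.integral_congr
          intro u _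
          simp only
          rw [hds u, hduG s u, hφσs, hγ0s]
          rw [mul_zero, sub_zero, div_one]
          ring
        rw [e1, intervalIntegral.integral_add hi1 hi2, hγ0s,
          inner_int2 d (c0 * (deriv (⇑φ) (s₀+σ*(s-s₀)) * σ)) 0 hd,
          inner_int1 d (c0 * φ (s₀+σ*(s-s₀))) 0 hd]
        simp only [hG1, if_neg habs, if_pos hgt.le]
        ring
      · have e2 : (∫ u in (0:ℝ)..d, (Φ σ s u)^2*(1-u*γ s))
            = ∫ u in (0:ℝ)..d, ((c0 * φ (s₀+σ*(s-s₀))) * Real.sin (π*u/(2*d)))^2 * (1-u*γ s) := by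
          apply intervalIntegral.integral_congr
          intro u _
          simp only
          rw [hΦ, hφσs, hc0]
        rw [e2, hγ0s, inner_int2 d (c0 * φ (s₀+σ*(s-s₀))) 0 hd]
        simp only [hG2, if_neg habs, if_pos hgt.le]
        ring
    -- case s < -s₀
    have hcase3 : ∀ s : ℝ, s < -s₀ →
        ((∫ u in (0:ℝ)..d, ((deriv (fun s' => Φ σ s' u) s)^2/(1-u*γ s)
            + (deriv (fun u' => Φ σ s u') u)^2*(1-u*γ s))) = G1 s
          ∧ (∫ u in (0:ℝ)..d, (Φ σ s u)^2*(1-u*γ s)) = G2 s) := by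
      intro s hlt
      have habs : ¬ |s| ≤ s₀ := not_le.2 (lt_of_lt_of_le (by linarith) (neg_le_abs s))
      have hsle : ¬ s₀ ≤ s := not_le.2 (by linarith)
      have hγ0s : γ s = 0 := hγ0 s habs
      have hφσs : φσ σ s = φ (-s₀+σ*(s+s₀)) := by rw [hφσ, if_neg habs, if_neg hsle]
      have hds : ∀ u : ℝ, deriv (fun s' => Φ σ s' u) s
          = c0 * Real.sin (π*u/(2*d)) * (deriv (⇑φ) (-s₀+σ*(s+s₀)) * σ) := by
        intro u
        have hev : (fun s' => Φ σ s' u) =ᶠ[nhds s]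
            (fun s' => (c0 * Real.sin (π*u/(2*d))) * φ (-s₀+σ*(s'+s₀))) := by
          filter_upwards [Iio_mem_nhds hlt] with x hx
          simp only [mem_Iio] at hx
          have hax : ¬ |x| ≤ s₀ := not_le.2 (lt_of_lt_of_le (by linarith) (neg_le_abs x))
          have hxle : ¬ s₀ ≤ x := not_le.2 (by linarith)
          rw [hΦ, hφσ, if_neg hax, if_neg hxle, hc0]
          ring
        rw [hev.deriv_eq]
        have haff : HasDerivAt (fun x : ℝ => -s₀+σ*(x+s₀)) σ s := by
          simpa using (((hasDerivAt_id s).add_const s₀).const_mul σ).const_add (-s₀)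
        have hφd : HasDerivAt (⇑φ) (deriv (⇑φ) (-s₀+σ*(s+s₀))) (-s₀+σ*(s+s₀)) :=
          φ.differentiableAt.hasDerivAt
        have hcomp := (hφd.comp s haff).const_mul (c0 * Real.sin (π*u/(2*d)))
        have := hcomp.deriv
        simpa [Function.comp, mul_assoc] using this
      constructor
      · have hi1 : IntervalIntegrable (fun u =>
            ((c0 * (deriv (⇑φ) (-s₀+σ*(s+s₀)) * σ)) * Real.sin (π*u/(2*d)))^2 * (1-u*γ s))
            volume 0 d := by
          apply Continuous.intervalIntegrable; fun_prop
        have hi2 : IntervalIntegrable (fun u =>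
            ((c0 * φ (-s₀+σ*(s+s₀))) * (Real.cos (π*u/(2*d)) * (π/(2*d))))^2 * (1-u*γ s))
            volume 0 d := by
          apply Continuous.intervalIntegrable; fun_prop
        have e1 : (∫ u in (0:ℝ)..d, ((deriv (fun s' => Φ σ s' u) s)^2/(1-u*γ s)
              + (deriv (fun u' => Φ σ s u') u)^2*(1-u*γ s)))
            = (∫ u in (0:ℝ)..d,
              (((c0 * (deriv (⇑φ) (-s₀+σ*(s+s₀)) * σ)) * Real.sin (π*u/(2*d)))^2 * (1-u*γ s)
              + ((c0 * φ (-s₀+σ*(s+s₀))) * (Real.cos (π*u/(2*d)) * (π/(2*d))))^2 * (1-u*γ s))) := by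
          apply intervalIntegral.integral_congr
          intro u _
          simp only
          rw [hds u, hduG s u, hφσs, hγ0s]
          rw [mul_zero, sub_zero, div_one]
          ring
        rw [e1, intervalIntegral.integral_add hi1 hi2, hγ0s,
          inner_int2 d (c0 * (deriv (⇑φ) (-s₀+σ*(s+s₀)) * σ)) 0 hd,
          inner_int1 d (c0 * φ (-s₀+σ*(s+s₀))) 0 hd]
        simp only [hG1, if_neg habs, if_neg hsle]
        ring
      · have e2 : (∫ u in (0:ℝ)..d, (Φ σ s u)^2*(1-u*γ s))
            = ∫ u in (0:ℝ)..d, ((c0 * φ (-s₀+σ*(s+s₀))) * Real.sin (π*u/(2*d)))^2 * (1-u*γ s) := by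
          apply intervalIntegral.integral_congr
          intro u _
          simp only
          rw [hΦ, hφσs, hc0]
        rw [e2, hγ0s, inner_int2 d (c0 * φ (-s₀+σ*(s+s₀))) 0 hd]
        simp only [hG2, if_neg habs, if_neg hsle]
        ring
    -- a.e. equality of the outer integrands
    have haes : ∀ᵐ (s:ℝ), s ≠ s₀ ∧ s ≠ -s₀ := by
      have h0 : volume ({s₀, -s₀} : Set ℝ) = 0 :=
        (Set.toFinite ({s₀, -s₀} : Set ℝ)).measure_zero volume
      filter_upwards [measure_eq_zero_iff_ae_notMem.1 h0] with s hs
      simp only [mem_insert_iff, mem_singleton_iff, not_or] at hs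
      exact hs
    have hI1 : (∫ s, ∫ u in (0:ℝ)..d, ((deriv (fun s' => Φ σ s' u) s)^2/(1-u*γ s)
          + (deriv (fun u' => Φ σ s u') u)^2*(1-u*γ s))) = ∫ s, G1 s := by
      apply MeasureTheory.integral_congr_ae
      filter_upwards [haes] with s hs
      rcases lt_trichotomy |s| s₀ with h|h|h
      · exact (hcase1 s h).1
      · rcases (abs_eq hs₀.le).1 h with h'|h'
        · exact absurd h' hs.1
        · exact absurd h' hs.2
      · rcases lt_abs.1 h with h'|h'
        · exact (hcase2 s h').1
        · exact (hcase3 s (by linarith)).1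
    have hI2 : (∫ s, ∫ u in (0:ℝ)..d, (Φ σ s u)^2*(1-u*γ s)) = ∫ s, G2 s := by
      apply MeasureTheory.integral_congr_ae
      filter_upwards [haes] with s hs
      rcases lt_trichotomy |s| s₀ with h|h|h
      · exact (hcase1 s h).2
      · rcases (abs_eq hs₀.le).1 h with h'|h'
        · exact absurd h' hs.1
        · exact absurd h' hs.2
      · rcases lt_abs.1 h with h'|h'
        · exact (hcase2 s h').2
        · exact (hcase3 s (by linarith)).2
    -- integrability building blocks
    have hip : Integrable (fun s : ℝ => (deriv (⇑φ) (s₀+σ*(s-s₀)))^2) :=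
      integrable_comp_affine hφ'sq σ s₀ s₀ hσ.ne'
    have hipφ : Integrable (fun s : ℝ => (φ (s₀+σ*(s-s₀)))^2) :=
      integrable_comp_affine hφsq σ s₀ s₀ hσ.ne'
    have him : Integrable (fun s : ℝ => (deriv (⇑φ) (-s₀+σ*(s+s₀)))^2) := by
      apply (integrable_comp_affine hφ'sq σ (-s₀) (-s₀) hσ.ne').congr
      apply Filter.Eventually.of_forall
      intro s
      show (deriv (⇑φ) (-s₀+σ*(s-(-s₀))))^2 = (deriv (⇑φ) (-s₀+σ*(s+s₀)))^2
      rw [show s - (-s₀) = s + s₀ from by ring]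
    have himφ : Integrable (fun s : ℝ => (φ (-s₀+σ*(s+s₀)))^2) := by
      apply (integrable_comp_affine hφsq σ (-s₀) (-s₀) hσ.ne').congr
      apply Filter.Eventually.of_forall
      intro s
      show (φ (-s₀+σ*(s-(-s₀))))^2 = (φ (-s₀+σ*(s+s₀)))^2
      rw [show s - (-s₀) = s + s₀ from by ring]
    have hmemIcc : ∀ s : ℝ, s ∈ Icc (-s₀) s₀ ↔ |s| ≤ s₀ := fun s => by
      rw [mem_Icc]; exact abs_le.symm
    have hcompl : (Icc (-s₀) s₀)ᶜ = Iio (-s₀) ∪ Ioi s₀ := by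
      ext x
      simp only [mem_compl_iff, mem_Icc, mem_union, mem_Iio, mem_Ioi, not_and_or, not_le]
    have hbp1 : Integrable (fun s : ℝ =>
        c0^2 * (σ^2*(deriv (⇑φ) (s₀+σ*(s-s₀)))^2 + (π/(2*d))^2*(φ (s₀+σ*(s-s₀)))^2) * (d/2)) :=
      (((hip.const_mul (σ^2)).add (hipφ.const_mul ((π/(2*d))^2))).const_mul (c0^2)).mul_const (d/2)
    have hbm1 : Integrable (fun s : ℝ =>
        c0^2 * (σ^2*(deriv (⇑φ) (-s₀+σ*(s+s₀)))^2 + (π/(2*d))^2*(φ (-s₀+σ*(s+s₀)))^2) * (d/2)) :=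
      (((him.const_mul (σ^2)).add (himφ.const_mul ((π/(2*d))^2))).const_mul (c0^2)).mul_const (d/2)
    have hbp2 : Integrable (fun s : ℝ => c0^2 * (φ (s₀+σ*(s-s₀)))^2 * (d/2)) :=
      (hipφ.const_mul (c0^2)).mul_const (d/2)
    have hbm2 : Integrable (fun s : ℝ => c0^2 * (φ (-s₀+σ*(s+s₀)))^2 * (d/2)) :=
      (himφ.const_mul (c0^2)).mul_const (d/2)
    have hG1i : Integrable G1 := by
      have hpe : G1 = (Icc (-s₀) s₀).piecewise
          (fun s => (c0*(π/(2*d)))^2 * (d/2 - γ s*(d^2/4 - (d^2/π^2))))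
          (fun s => if s₀ ≤ s then
              c0^2 * (σ^2*(deriv (⇑φ) (s₀+σ*(s-s₀)))^2 + (π/(2*d))^2*(φ (s₀+σ*(s-s₀)))^2) * (d/2)
            else
              c0^2 * (σ^2*(deriv (⇑φ) (-s₀+σ*(s+s₀)))^2 + (π/(2*d))^2*(φ (-s₀+σ*(s+s₀)))^2) * (d/2)) := by
        funext s
        by_cases hmem : s ∈ Icc (-s₀) s₀
        · rw [Set.piecewise_eq_of_mem _ _ _ hmem, hG1]
          simp only [if_pos ((hmemIcc s).1 hmem)]
        · rw [Set.piecewise_eq_of_notMem _ _ _ hmem, hG1]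
          simp only [if_neg (fun hh => hmem ((hmemIcc s).2 hh))]
      rw [hpe]
      apply Integrable.piecewise measurableSet_Icc
      · apply Continuous.integrableOn_Icc
        fun_prop
      · rw [hcompl]
        apply IntegrableOn.union
        · exact (hbm1.integrableOn).congr_fun
            (fun s hs => (if_neg (not_le.2 (by simp only [mem_Iio] at hs; linarith))).symm)
            measurableSet_Iio
        · exact (hbp1.integrableOn).congr_fun
            (fun s hs => (if_pos (mem_Ioi.1 hs).le).symm) measurableSet_Ioi
    have hG2i : Integrable G2 := by
      have hpe : G2 = (Icc (-s₀) s₀).piecewise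
          (fun s => c0^2 * (d/2 - γ s*(d^2/4 + (d^2/π^2))))
          (fun s => if s₀ ≤ s then c0^2 * (φ (s₀+σ*(s-s₀)))^2 * (d/2)
            else c0^2 * (φ (-s₀+σ*(s+s₀)))^2 * (d/2)) := by
        funext s
        by_cases hmem : s ∈ Icc (-s₀) s₀
        · rw [Set.piecewise_eq_of_mem _ _ _ hmem, hG2]
          simp only [if_pos ((hmemIcc s).1 hmem)]
        · rw [Set.piecewise_eq_of_notMem _ _ _ hmem, hG2]
          simp only [if_neg (fun hh => hmem ((hmemIcc s).2 hh))]
      rw [hpe]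
      apply Integrable.piecewise measurableSet_Icc
      · apply Continuous.integrableOn_Icc
        fun_prop
      · rw [hcompl]
        apply IntegrableOn.union
        · exact (hbm2.integrableOn).congr_fun
            (fun s hs => (if_neg (not_le.2 (by simp only [mem_Iio] at hs; linarith))).symm)
            measurableSet_Iio
        · exact (hbp2.integrableOn).congr_fun
            (fun s hs => (if_pos (mem_Ioi.1 hs).le).symm) measurableSet_Ioi
    have hQeq : Q σ = ∫ s, (G1 s - π^2/(4*d^2) * G2 s) := by
      rw [hQ σ, hI1, hI2, ← MeasureTheory.integral_const_mul,
        ← integral_sub hG1i (hG2i.const_mul _)]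
    have hGH : ∀ s : ℝ, G1 s - π^2/(4*d^2) * G2 s
        = (Icc (-s₀) s₀).piecewise (fun s => γ s * (1/d))
          (fun s => if s₀ ≤ s then σ^2*(deriv (⇑φ) (s₀+σ*(s-s₀)))^2
            else σ^2*(deriv (⇑φ) (-s₀+σ*(s+s₀)))^2) s := by
      intro s
      rw [hG1, hG2]
      simp only
      by_cases hmem : s ∈ Icc (-s₀) s₀
      · have h : |s| ≤ s₀ := (hmemIcc s).1 hmem
        rw [Set.piecewise_eq_of_mem _ _ _ hmem, if_pos h, if_pos h, mul_pow, hc0sq]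
        field_simp
        ring
      · have h : ¬ |s| ≤ s₀ := fun hh => hmem ((hmemIcc s).2 hh)
        rw [Set.piecewise_eq_of_notMem _ _ _ hmem, if_neg h, if_neg h]
        by_cases h2 : s₀ ≤ s
        · rw [if_pos h2, if_pos h2, if_pos h2, hc0sq]
          field_simp
          ring
        · rw [if_neg h2, if_neg h2, if_neg h2, hc0sq]
          field_simp
          ring
    have hOnm : IntegrableOn (fun s : ℝ => if s₀ ≤ s then σ^2*(deriv (⇑φ) (s₀+σ*(s-s₀)))^2
        else σ^2*(deriv (⇑φ) (-s₀+σ*(s+s₀)))^2) (Iio (-s₀)) :=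
      ((him.const_mul (σ^2)).integrableOn).congr_fun
        (fun s hs => (if_neg (not_le.2 (by simp only [mem_Iio] at hs; linarith))).symm)
        measurableSet_Iio
    have hOnp : IntegrableOn (fun s : ℝ => if s₀ ≤ s then σ^2*(deriv (⇑φ) (s₀+σ*(s-s₀)))^2
        else σ^2*(deriv (⇑φ) (-s₀+σ*(s+s₀)))^2) (Ioi s₀) :=
      ((hip.const_mul (σ^2)).integrableOn).congr_fun
        (fun s hs => (if_pos (mem_Ioi.1 hs).le).symm) measurableSet_Ioi
    have htail : IntegrableOn (fun s : ℝ => if s₀ ≤ s then σ^2*(deriv (⇑φ) (s₀+σ*(s-s₀)))^2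
        else σ^2*(deriv (⇑φ) (-s₀+σ*(s+s₀)))^2) (Icc (-s₀) s₀)ᶜ := by
      rw [hcompl]
      exact hOnm.union hOnp
    have hint : ∫ s, (G1 s - π^2/(4*d^2) * G2 s)
        = (∫ s in Icc (-s₀) s₀, γ s * (1/d))
          + ∫ s in (Icc (-s₀) s₀)ᶜ, (if s₀ ≤ s then σ^2*(deriv (⇑φ) (s₀+σ*(s-s₀)))^2
              else σ^2*(deriv (⇑φ) (-s₀+σ*(s+s₀)))^2) := by
      rw [MeasureTheory.integral_congr_ae (Filter.Eventually.of_forall hGH)]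
      exact integral_piecewise measurableSet_Icc (hγi.mul_const _).integrableOn htail
    have hP1 : (∫ s in Icc (-s₀) s₀, γ s * (1/d)) = (∫ s, γ s) * (1/d) := by
      rw [MeasureTheory.integral_mul_const]
      congr 1
      rw [← MeasureTheory.integral_indicator measurableSet_Icc,
        indicator_eq_self.2 hγsupp']
    have hPm : (∫ s in Iio (-s₀), (if s₀ ≤ s then σ^2*(deriv (⇑φ) (s₀+σ*(s-s₀)))^2
        else σ^2*(deriv (⇑φ) (-s₀+σ*(s+s₀)))^2))
        = σ * ∫ t in Iio (-s₀), (deriv (⇑φ) t)^2 := by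
      have e1 : (∫ s in Iio (-s₀), (if s₀ ≤ s then σ^2*(deriv (⇑φ) (s₀+σ*(s-s₀)))^2
          else σ^2*(deriv (⇑φ) (-s₀+σ*(s+s₀)))^2))
          = ∫ s in Iio (-s₀), σ^2*(deriv (⇑φ) ((-s₀)+σ*(s-(-s₀))))^2 := by
        apply setIntegral_congr_fun measurableSet_Iio
        intro s hs
        simp only [mem_Iio] at hs
        have hns : ¬ s₀ ≤ s := not_le.2 (by linarith)
        simp only [if_neg hns]
        rw [show s + s₀ = s - (-s₀) from by ring]
      rw [e1, MeasureTheory.integral_const_mul]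
      have hcv := cov_Iio (fun t => (deriv (⇑φ) t)^2) σ (-s₀) hσ
      linear_combination (-σ) * hcv
    have hPp : (∫ s in Ioi s₀, (if s₀ ≤ s then σ^2*(deriv (⇑φ) (s₀+σ*(s-s₀)))^2
        else σ^2*(deriv (⇑φ) (-s₀+σ*(s+s₀)))^2))
        = σ * ∫ t in Ioi s₀, (deriv (⇑φ) t)^2 := by
      have e1 : (∫ s in Ioi s₀, (if s₀ ≤ s then σ^2*(deriv (⇑φ) (s₀+σ*(s-s₀)))^2
          else σ^2*(deriv (⇑φ) (-s₀+σ*(s+s₀)))^2))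
          = ∫ s in Ioi s₀, σ^2*(deriv (⇑φ) (s₀+σ*(s-s₀)))^2 := by
        apply setIntegral_congr_fun measurableSet_Ioi
        intro s hs
        simp only [if_pos (mem_Ioi.1 hs).le]
      rw [e1, MeasureTheory.integral_const_mul]
      have hcv := cov_Ioi (fun t => (deriv (⇑φ) t)^2) σ s₀ hσ
      linear_combination (-σ) * hcv
    have hP2 : (∫ s in (Icc (-s₀) s₀)ᶜ, (if s₀ ≤ s then σ^2*(deriv (⇑φ) (s₀+σ*(s-s₀)))^2
        else σ^2*(deriv (⇑φ) (-s₀+σ*(s+s₀)))^2))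
        = σ * (∫ t in Iio (-s₀), (deriv (⇑φ) t)^2) + σ * (∫ t in Ioi s₀, (deriv (⇑φ) t)^2) := by
      rw [hcompl, setIntegral_union hdisj measurableSet_Ioi hOnm hOnp, hPm, hPp]
    rw [hQeq, hint, hP1, hP2]
    ring
  constructor
  · intro σ hσ
    rw [key σ hσ, hγp0]
    have h1 : σ * ((∫ t in Iio (-s₀), (deriv (⇑φ) t)^2) + (∫ t in Ioi s₀, (deriv (⇑φ) t)^2))
        ≤ σ * ∫ t, (deriv (⇑φ) t)^2 := mul_le_mul_of_nonneg_left hTle hσ.le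
    rw [mul_zero, sub_zero, div_one]
    linarith
  · refine ⟨(-((1/d) * ∫ s, γ s)) / ((∫ t, (deriv (⇑φ) t)^2) + 1),
      div_pos (by linarith) (by linarith), ?_⟩
    intro σ hσ hlt
    rw [key σ hσ]
    have h1 : σ * ((∫ t in Iio (-s₀), (deriv (⇑φ) t)^2) + (∫ t in Ioi s₀, (deriv (⇑φ) t)^2))
        ≤ σ * ∫ t, (deriv (⇑φ) t)^2 := mul_le_mul_of_nonneg_left hTle hσ.le
    have h2 : σ * ((∫ t, (deriv (⇑φ) t)^2) + 1) < -((1/d) * ∫ s, γ s) :=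
      (lt_div_iff₀ (by linarith)).1 hlt
    nlinarith
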